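/- Let p = r₁(x)·s₂(y) − r₂(y)·s₁(x) where r₁, s₁ ∈ K[x₁,…,xₙ] and r₂, s₂ ∈ K[y₁,…,yₙ] are non-constant polynomials with gcd(r₁,s₁) = 1 and gcd(r₂,s₂) = 1, and neither r₁,s₁ nor r₂,s₂ are associated. Then p has no non-constant factor lying in K[x₁,…,xₙ] or in K[y₁,…,yₙ]. -/

import Mathlib

open MvPolynomial

set_option maxHeartbeats 1000000
set_option synthInstance.maxHeartbeats 400000

/-- If `C a * map f u = C b * map f v` over a domain, with `a, b` not both zero and
`u, v` nonzero, then `u` and `v` are associated. -/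
private lemma aux_key {σ K D : Type*} [Field K] [CommRing D] [IsDomain D]
    (f : K →+* D) {u v : MvPolynomial σ K} (hu : u ≠ 0) (hv : v ≠ 0)
    {a b : D} (hab : ¬(a = 0 ∧ b = 0))
    (h : (C a : MvPolynomial σ D) * map f u = C b * map f v) : Associated u v := by
  have hf : Function.Injective f := f.injective
  have hco : ∀ m, a * f (coeff m u) = b * f (coeff m v) := by
    intro m
    have := congrArg (coeff m) h
    simpa [coeff_C_mul, coeff_map] using this
  have finj0 : ∀ x : K, f x = 0 → x = 0 := by
    intro x hx
    exact hf (by simpa using hx)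
  have ha : a ≠ 0 := by
    rintro rfl
    have hb : b ≠ 0 := fun hb => hab ⟨rfl, hb⟩
    apply hv
    ext m
    have hm := hco m
    rw [zero_mul] at hm
    rcases mul_eq_zero.mp hm.symm with h' | h'
    · exact absurd h' hb
    · simpa using finj0 _ h'
  have hb : b ≠ 0 := by
    rintro rfl
    apply hu
    ext m
    have hm := hco m
    rw [zero_mul] at hm
    rcases mul_eq_zero.mp hm with h' | h'
    · exact absurd h' ha
    · simpa using finj0 _ h'
  obtain ⟨m₀, hU0⟩ := MvPolynomial.ne_zero_iff.mp hu
  have hV0 : coeff m₀ v ≠ 0 := by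
    intro h0
    have hm := hco m₀
    rw [h0, map_zero, mul_zero] at hm
    rcases mul_eq_zero.mp hm with h' | h'
    · exact ha h'
    · exact hU0 (finj0 _ h')
  set c : K := coeff m₀ v / coeff m₀ u with hc_def
  have hc : c ≠ 0 := div_ne_zero hV0 hU0
  have claim : ∀ m, coeff m v = c * coeff m u := by
    intro m
    have h1 := hco m
    have h2 := hco m₀
    have key : (a * b) * f (coeff m v * coeff m₀ u) = (a * b) * f (coeff m u * coeff m₀ v) := by
      rw [map_mul, map_mul]
      linear_combination (a * f (coeff m u)) * h2 - (a * f (coeff m₀ u)) * h1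
    have key2 := hf (mul_left_cancel₀ (mul_ne_zero ha hb) key)
    -- key2 : coeff m v * coeff m₀ u = coeff m u * coeff m₀ v
    rw [hc_def, div_mul_eq_mul_div, eq_div_iff hU0]
    linear_combination key2
  have hveq : v = C c * u := by
    ext m
    rw [coeff_C_mul]
    exact claim m
  have hcu : IsUnit (C c : MvPolynomial σ K) := (isUnit_iff_ne_zero.mpr hc).map (C : K →+* _)
  exact ⟨hcu.unit, by rw [IsUnit.unit_spec, hveq]; ring⟩

private lemma aux_finSuccEquiv_rename_succ {K : Type*} [Field K] {n : ℕ}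
    (r : MvPolynomial (Fin n) K) :
    Polynomial.C r = MvPolynomial.finSuccEquiv K n (rename Fin.succ r) := by
  induction r using MvPolynomial.induction_on with
  | C a => simp [finSuccEquiv_apply]
  | add p q hp hq => simp [map_add, ← hp, ← hq]
  | mul_X p i hp => simp [map_mul, ← hp, finSuccEquiv_X_succ]

/-- A unit in a multivariate polynomial ring over a field has total degree zero. -/
private lemma aux_unit_totalDegree {K : Type*} [Field K] :
    ∀ {n : ℕ} (q : MvPolynomial (Fin n) K), IsUnit q → q.totalDegree = 0 := by
  intro n
  induction n with
  | zero =>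
    intro q _
    rw [MvPolynomial.eq_C_of_isEmpty q]
    exact totalDegree_C _
  | succ n ih =>
    intro q hq
    have hq' : IsUnit (finSuccEquiv K n q) := hq.map (finSuccEquiv K n)
    obtain ⟨r, hr, hCr⟩ := Polynomial.isUnit_iff.mp hq'
    have hrd : r.totalDegree = 0 := ih r hr
    have hq_eq : q = rename Fin.succ r := by
      apply (finSuccEquiv K n).injective
      rw [hCr.symm, aux_finSuccEquiv_rename_succ]
    rw [hq_eq]
    exact Nat.le_antisymm (hrd ▸ totalDegree_rename_le _ _) (Nat.zero_le _)

private lemma aux_not_unit {K : Type*} [Field K] {n : ℕ} {q : MvPolynomial (Fin n) K}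
    (hq : 0 < q.totalDegree) : ¬ IsUnit q :=
  fun h => by simp [aux_unit_totalDegree q h] at hq

/-- Main auxiliary lemma: reduction modulo an irreducible factor of `q`. -/
private lemma aux_main {K : Type*} [Field K] {n : ℕ}
    (A B U V : MvPolynomial (Fin n) K)
    (hU : 0 < U.totalDegree) (hV : 0 < V.totalDegree)
    (hgcd : ∀ d : MvPolynomial (Fin n) K, d ∣ A → d ∣ B → IsUnit d)
    (hna : ¬ Associated U V)
    (q : MvPolynomial (Fin n) K) (hq : 0 < q.totalDegree)
    (hdvd : (C q : MvPolynomial (Fin n) (MvPolynomial (Fin n) K)) ∣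
      (C A * map C U - map C V * C B)) : False := by
  have hq0 : q ≠ 0 := by
    intro h
    rw [h] at hq
    simp at hq
  obtain ⟨π, hπ, hπq⟩ :=
    WfDvdMonoid.exists_irreducible_factor (aux_not_unit hq) hq0
  have hπ_prime : Prime π := UniqueFactorizationMonoid.irreducible_iff_prime.mp hπ
  set I : Ideal (MvPolynomial (Fin n) K) := Ideal.span {π} with hI
  haveI hIprime : I.IsPrime := (Ideal.span_singleton_prime hπ_prime.ne_zero).mpr hπ_prime
  haveI : IsDomain ((MvPolynomial (Fin n) K) ⧸ I) := Ideal.Quotient.isDomain I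
  set g : MvPolynomial (Fin n) K →+* (MvPolynomial (Fin n) K) ⧸ I := Ideal.Quotient.mk I
  set f : K →+* (MvPolynomial (Fin n) K) ⧸ I := g.comp (C : K →+* _)
  -- push the divisibility through `map g`
  have hdvd' : (MvPolynomial.map g) (C q : MvPolynomial (Fin n) (MvPolynomial (Fin n) K)) ∣
      (MvPolynomial.map g) (C A * map C U - map C V * C B) := map_dvd _ hdvd
  have hgq : g q = 0 := (Ideal.Quotient.eq_zero_iff_dvd π q).mpr hπq
  have hmapCq : (MvPolynomial.map g) (C q : MvPolynomial (Fin n) (MvPolynomial (Fin n) K)) = 0 := by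
    rw [map_C, hgq, map_zero]
  rw [hmapCq, zero_dvd_iff] at hdvd'
  have hexp : (MvPolynomial.map g) (C A * map C U - map C V * C B)
      = C (g A) * map f U - map f V * C (g B) := by
    rw [map_sub, map_mul, map_mul, map_C, map_C, MvPolynomial.map_map, MvPolynomial.map_map]
  rw [hexp, sub_eq_zero] at hdvd'
  -- hdvd' : C (g A) * map f U = map f V * C (g B)
  have hU0 : U ≠ 0 := by intro h; rw [h] at hU; simp at hU
  have hV0 : V ≠ 0 := by intro h; rw [h] at hV; simp at hV
  have hab : ¬(g A = 0 ∧ g B = 0) := by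
    rintro ⟨hA, hB⟩
    rw [Ideal.Quotient.eq_zero_iff_dvd] at hA hB
    exact hπ.not_isUnit (hgcd π hA hB)
  exact hna (aux_key f hU0 hV0 hab (by rw [hdvd']; ring))

private lemma aux_sumToIter_inl {R S₁ S₂ : Type*} [CommSemiring R] (u : MvPolynomial S₁ R) :
    sumToIter R S₁ S₂ (rename Sum.inl u) = map C u := by
  induction u using MvPolynomial.induction_on with
  | C a => simp [sumToIter_C]
  | add p q hp hq => simp [map_add, hp, hq]
  | mul_X p i hp => simp [map_mul, hp, sumToIter_Xl]

private lemma aux_sumToIter_inr {R S₁ S₂ : Type*} [CommSemiring R] (u : MvPolynomial S₂ R) :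
    sumToIter R S₁ S₂ (rename Sum.inr u) = C u := by
  induction u using MvPolynomial.induction_on with
  | C a => simp [sumToIter_C]
  | add p q hp hq => simp [map_add, hp, hq]
  | mul_X p i hp => simp [map_mul, hp, sumToIter_Xr]

/-- A near-separated polynomial `p = r₁(x)s₂(y) − r₂(y)s₁(x)` with
`gcd(r₁,s₁) = 1`, `gcd(r₂,s₂) = 1` and neither pair associated has no non-constant
factor lying in `K[x₁,…,xₙ]` or in `K[y₁,…,yₙ]`. -/
theorem near_separated_no_factor_in_x_or_y
    {K : Type*} [Field K] {n : ℕ}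
    (r₁ s₁ r₂ s₂ : MvPolynomial (Fin n) K)
    (hr₁ : 0 < r₁.totalDegree) (hs₁ : 0 < s₁.totalDegree)
    (hr₂ : 0 < r₂.totalDegree) (hs₂ : 0 < s₂.totalDegree)
    (hgcd₁ : ∀ d : MvPolynomial (Fin n) K, d ∣ r₁ → d ∣ s₁ → IsUnit d)
    (hgcd₂ : ∀ d : MvPolynomial (Fin n) K, d ∣ r₂ → d ∣ s₂ → IsUnit d)
    (hna₁ : ¬ Associated r₁ s₁) (hna₂ : ¬ Associated r₂ s₂)
    (p : MvPolynomial (Fin n ⊕ Fin n) K)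
    (hp : p = rename Sum.inl r₁ * rename Sum.inr s₂ - rename Sum.inr r₂ * rename Sum.inl s₁) :
    ∀ q : MvPolynomial (Fin n) K, 0 < q.totalDegree →
      ¬ (rename Sum.inl q ∣ p) ∧ ¬ (rename Sum.inr q ∣ p) := by
  intro q hq
  constructor
  · -- factor in the x-variables
    intro hdvd
    -- use swap then sumToIter, so that x-variables become coefficients
    set F : MvPolynomial (Fin n ⊕ Fin n) K →+*
        MvPolynomial (Fin n) (MvPolynomial (Fin n) K) :=
      (sumToIter K (Fin n) (Fin n)).comp (rename (Sum.swap : Fin n ⊕ Fin n → Fin n ⊕ Fin n)).toRingHom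
    have Finl : ∀ u : MvPolynomial (Fin n) K, F (rename Sum.inl u) = C u := by
      intro u
      show sumToIter K (Fin n) (Fin n) ((rename Sum.swap) ((rename Sum.inl) u)) = _
      rw [rename_rename]
      have : (Sum.swap ∘ Sum.inl : Fin n → Fin n ⊕ Fin n) = Sum.inr := rfl
      rw [this, aux_sumToIter_inr]
    have Finr : ∀ u : MvPolynomial (Fin n) K, F (rename Sum.inr u) = map C u := by
      intro u
      show sumToIter K (Fin n) (Fin n) ((rename Sum.swap) ((rename Sum.inr) u)) = _
      rw [rename_rename]
      have : (Sum.swap ∘ Sum.inr : Fin n → Fin n ⊕ Fin n) = Sum.inl := rfl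
      rw [this, aux_sumToIter_inl]
    have hFp : F p = C r₁ * map C s₂ - map C r₂ * C s₁ := by
      rw [hp, map_sub, map_mul, map_mul, Finl, Finl, Finr, Finr]
    have hdvd' : (C q : MvPolynomial (Fin n) (MvPolynomial (Fin n) K)) ∣
        (C r₁ * map C s₂ - map C r₂ * C s₁) := by
      rw [← hFp, ← Finl q]
      exact F.map_dvd hdvd
    exact aux_main r₁ s₁ s₂ r₂ hs₂ hr₂ hgcd₁ (fun h => hna₂ h.symm) q hq hdvd'
  · -- factor in the y-variables
    intro hdvd
    set G : MvPolynomial (Fin n ⊕ Fin n) K →+*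
        MvPolynomial (Fin n) (MvPolynomial (Fin n) K) := (sumToIter K (Fin n) (Fin n))
    have hGp : G p = map C r₁ * C s₂ - C r₂ * map C s₁ := by
      rw [hp, map_sub, map_mul, map_mul, aux_sumToIter_inl, aux_sumToIter_inl,
        aux_sumToIter_inr, aux_sumToIter_inr]
    have hdvd' : (C q : MvPolynomial (Fin n) (MvPolynomial (Fin n) K)) ∣
        (C r₂ * map C s₁ - map C r₁ * C s₂) := by
      have h1 : (C q : MvPolynomial (Fin n) (MvPolynomial (Fin n) K)) ∣ G p := by
        rw [← aux_sumToIter_inr q]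
        exact G.map_dvd hdvd
      have h2 : C r₂ * map C s₁ - map C r₁ * C s₂ = -(G p) := by rw [hGp]; ring
      rw [h2]
      exact h1.neg_right
    exact aux_main r₂ s₂ s₁ r₁ hs₁ hr₁ hgcd₂ (fun h => hna₁ h.symm) q hq hdvd'
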